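/- Let φ : Δ → ℂ be an affine (real-linear plus constant) map of a Euclidean triangle Δ with angles α ≤ β ≤ γ. Let L be the operator norm of the linear part of φ, and let l be the maximum over the three sides of Δ of the length distortion of φ restricted to that side. Then L ≤ 4 l / sin²β ≤ l π² / β². -/

import Mathlib

open EuclideanGeometry

set_option maxHeartbeats 1000000 in

theorem stmt_12 (f : EuclideanSpace ℝ (Fin 2) →L[ℝ] EuclideanSpace ℝ (Fin 2))
    (w : EuclideanSpace ℝ (Fin 2))
    (φ : EuclideanSpace ℝ (Fin 2) → EuclideanSpace ℝ (Fin 2))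
    (hφ : ∀ v, φ v = f v + w)
    (A B C : EuclideanSpace ℝ (Fin 2)) (hABC : ¬ Collinear ℝ ({A, B, C} : Set _))
    (α β γ l : ℝ)
    (hα : α = ∠ B A C) (hβ : β = ∠ A B C) (hγ : γ = ∠ A C B)
    (hαβ : α ≤ β) (hβγ : β ≤ γ)
    (hl : l = max (max (‖f (B - A)‖ / ‖B - A‖) (‖f (C - B)‖ / ‖C - B‖))
      (‖f (A - C)‖ / ‖A - C‖)) :
    ‖f‖ ≤ 4 * l / Real.sin β ^ 2 ∧
      4 * l / Real.sin β ^ 2 ≤ l * Real.pi ^ 2 / β ^ 2 := by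
  have hAB : A ≠ B := ne₁₂_of_not_collinear hABC
  have hBC : B ≠ C := ne₂₃_of_not_collinear hABC
  have hAC : A ≠ C := ne₁₃_of_not_collinear hABC
  set u : EuclideanSpace ℝ (Fin 2) := A - B with hu_def
  set v : EuclideanSpace ℝ (Fin 2) := C - B with hv_def
  have hu : u ≠ 0 := sub_ne_zero.mpr hAB
  have hv : v ≠ 0 := sub_ne_zero.mpr hBC.symm
  have hun : (0:ℝ) < ‖u‖ := norm_pos_iff.mpr hu
  have hvn : (0:ℝ) < ‖v‖ := norm_pos_iff.mpr hv
  -- β as a vector angle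
  have hβv : β = InnerProductGeometry.angle u v := by
    rw [hβ]; simp [EuclideanGeometry.angle, vsub_eq_sub, hu_def, hv_def]
  -- sin β > 0
  have hsβ : 0 < Real.sin β := hβ ▸ sin_pos_of_not_collinear hABC
  have hβ0 : 0 < β := hβ ▸ angle_pos_of_not_collinear hABC
  -- β ≤ π/2
  have hβhalf : β ≤ Real.pi / 2 := by
    have hsum := EuclideanGeometry.angle_add_angle_add_angle_eq_pi (p₁ := A) (p₂ := B) (p₃ := C)
      hAB.symm
    rw [EuclideanGeometry.angle_comm B C A, EuclideanGeometry.angle_comm C A B] at hsum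
    have hα0 : 0 ≤ α := hα ▸ EuclideanGeometry.angle_nonneg _ _ _
    rw [← hβ, ← hγ, ← hα] at hsum
    linarith
  have hsβ1 : Real.sin β ≤ 1 := Real.sin_le_one β
  -- l ≥ 0 and distortion bounds
  have hl0 : 0 ≤ l := by
    rw [hl]
    exact le_trans (by positivity) ((le_max_right _ _).trans (le_max_left _ _))
  have hfu : ‖f u‖ ≤ l * ‖u‖ := by
    have h1 : ‖f (B - A)‖ / ‖B - A‖ ≤ l := hl ▸ (le_max_left _ _).trans (le_max_left _ _)
    have h2 : ‖f u‖ = ‖f (B - A)‖ := by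
      rw [hu_def, ← neg_sub B A, map_neg, norm_neg]
    have h3 : ‖u‖ = ‖B - A‖ := norm_sub_rev _ _
    rw [h2, h3]
    exact (div_le_iff₀ (by rw [← h3]; exact hun)).mp h1
  have hfv : ‖f v‖ ≤ l * ‖v‖ := by
    have h1 : ‖f (C - B)‖ / ‖C - B‖ ≤ l := hl ▸ (le_max_right _ _).trans (le_max_left _ _)
    exact (div_le_iff₀ hvn).mp h1
  -- area form setup
  haveI : Fact (Module.finrank ℝ (EuclideanSpace ℝ (Fin 2)) = 2) := ⟨finrank_euclideanSpace_fin⟩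
  set o : Orientation ℝ (EuclideanSpace ℝ (Fin 2)) (Fin 2) :=
    (EuclideanSpace.basisFun (Fin 2) ℝ).toBasis.orientation with ho
  set D : ℝ := o.areaForm u v with hD_def
  have hD2 : D ^ 2 = (‖u‖ * ‖v‖ * Real.sin β) ^ 2 := by
    have h1 := o.inner_sq_add_areaForm_sq u v
    have h2 := InnerProductGeometry.cos_angle_mul_norm_mul_norm u v
    have h3 := Real.sin_sq_add_cos_sq β
    rw [← hβv] at h2
    rw [← h2] at h1
    linear_combination h1 - (‖u‖ * ‖v‖) ^ 2 * h3
  have hDabs : |D| = ‖u‖ * ‖v‖ * Real.sin β := by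
    rw [← Real.sqrt_sq_eq_abs, hD2, Real.sqrt_sq (by positivity)]
  have hDne : D ≠ 0 := by
    intro h
    rw [h, abs_zero] at hDabs
    nlinarith [mul_pos (mul_pos hun hvn) hsβ]
  -- basis from u, v
  have hli : LinearIndependent ℝ ![u, v] := by
    refine linearIndependent_fin2.mpr ⟨by simpa using hv, fun a h => ?_⟩
    simp only [Matrix.cons_val_zero, Matrix.cons_val_one, Matrix.head_cons] at h
    apply hDne
    rw [hD_def, ← h]
    simp [o.areaForm_apply_self]
  have hcard : Fintype.card (Fin 2) = Module.finrank ℝ (EuclideanSpace ℝ (Fin 2)) := by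
    simp [finrank_euclideanSpace_fin]
  let b := basisOfLinearIndependentOfCardEqFinrank hli hcard
  have hb : ⇑b = ![u, v] := coe_basisOfLinearIndependentOfCardEqFinrank _ _
  -- operator norm bound
  have hmain : ‖f‖ ≤ 4 * l / Real.sin β ^ 2 := by
    refine f.opNorm_le_bound (by positivity) fun x => ?_
    have hx : b.repr x 0 • u + b.repr x 1 • v = x := by
      have h := b.sum_repr x
      rw [Fin.sum_univ_two] at h
      simpa [hb] using h
    set a : ℝ := b.repr x 0
    set c : ℝ := b.repr x 1
    have hav : o.areaForm x v = a * D := by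
      rw [← hx]
      simp [map_add, map_smul, o.areaForm_apply_self, hD_def]
    have hux : o.areaForm u x = c * D := by
      rw [← hx]
      simp [map_add, map_smul, o.areaForm_apply_self, hD_def]
    have ha : |a| * (‖u‖ * ‖v‖ * Real.sin β) ≤ ‖x‖ * ‖v‖ := by
      calc |a| * (‖u‖ * ‖v‖ * Real.sin β) = |a| * |D| := by rw [hDabs]
        _ = |a * D| := (abs_mul a D).symm
        _ = |o.areaForm x v| := by rw [hav]
        _ ≤ ‖x‖ * ‖v‖ := o.abs_areaForm_le x v
    have hc : |c| * (‖u‖ * ‖v‖ * Real.sin β) ≤ ‖u‖ * ‖x‖ := by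
      calc |c| * (‖u‖ * ‖v‖ * Real.sin β) = |c| * |D| := by rw [hDabs]
        _ = |c * D| := (abs_mul c D).symm
        _ = |o.areaForm u x| := by rw [hux]
        _ ≤ ‖u‖ * ‖x‖ := o.abs_areaForm_le u x
    have ha' : |a| * ‖u‖ * Real.sin β ≤ ‖x‖ := by
      refine le_of_mul_le_mul_right ?_ hvn
      calc (|a| * ‖u‖ * Real.sin β) * ‖v‖ = |a| * (‖u‖ * ‖v‖ * Real.sin β) := by ring
        _ ≤ ‖x‖ * ‖v‖ := ha
    have hc' : |c| * ‖v‖ * Real.sin β ≤ ‖x‖ := by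
      refine le_of_mul_le_mul_right ?_ hun
      calc (|c| * ‖v‖ * Real.sin β) * ‖u‖ = |c| * (‖u‖ * ‖v‖ * Real.sin β) := by ring
        _ ≤ ‖u‖ * ‖x‖ := hc
        _ = ‖x‖ * ‖u‖ := mul_comm _ _
    have hfx : ‖f x‖ ≤ |a| * ‖f u‖ + |c| * ‖f v‖ := by
      calc ‖f x‖ = ‖a • f u + c • f v‖ := by
            rw [← hx]; simp [map_add, map_smul]
        _ ≤ ‖a • f u‖ + ‖c • f v‖ := norm_add_le _ _
        _ = |a| * ‖f u‖ + |c| * ‖f v‖ := by simp [norm_smul, Real.norm_eq_abs]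
    rw [div_mul_eq_mul_div, le_div_iff₀ (by positivity)]
    have h1 : ‖f x‖ ≤ |a| * (l * ‖u‖) + |c| * (l * ‖v‖) :=
      hfx.trans (add_le_add (mul_le_mul_of_nonneg_left hfu (abs_nonneg a))
        (mul_le_mul_of_nonneg_left hfv (abs_nonneg c)))
    have e2 : ‖f x‖ * Real.sin β ≤ 2 * l * ‖x‖ := by
      calc ‖f x‖ * Real.sin β ≤ (|a| * (l * ‖u‖) + |c| * (l * ‖v‖)) * Real.sin β :=
            mul_le_mul_of_nonneg_right h1 hsβ.le
        _ = (|a| * ‖u‖ * Real.sin β) * l + (|c| * ‖v‖ * Real.sin β) * l := by ring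
        _ ≤ ‖x‖ * l + ‖x‖ * l := add_le_add (mul_le_mul_of_nonneg_right ha' hl0)
            (mul_le_mul_of_nonneg_right hc' hl0)
        _ = 2 * l * ‖x‖ := by ring
    calc ‖f x‖ * Real.sin β ^ 2 = (‖f x‖ * Real.sin β) * Real.sin β := by ring
      _ ≤ (2 * l * ‖x‖) * Real.sin β := mul_le_mul_of_nonneg_right e2 hsβ.le
      _ ≤ (2 * l * ‖x‖) * 1 := mul_le_mul_of_nonneg_left hsβ1 (by positivity)
      _ ≤ 4 * l * ‖x‖ := by nlinarith [mul_nonneg hl0 (norm_nonneg x)]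
  refine ⟨hmain, ?_⟩
  rw [div_le_div_iff₀ (by positivity) (by positivity)]
  have hps : 2 * β ≤ Real.pi * Real.sin β := by
    have h := Real.mul_le_sin hβ0.le hβhalf
    have hπ : (0:ℝ) < Real.pi := Real.pi_pos
    have := mul_le_mul_of_nonneg_left h hπ.le
    calc 2 * β = Real.pi * (2 / Real.pi * β) := by field_simp
      _ ≤ Real.pi * Real.sin β := this
  nlinarith [mul_self_le_mul_self (by positivity : (0:ℝ) ≤ 2 * β) hps, hl0, hβ0]
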